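/- Let G = (V, E) be a finite simple undirected graph. The minimal number of states of a deterministic Rabin automaton recognising L_G is exactly the chromatic number χ(G) of G. -/

import Mathlib

/-- The set of letters occurring infinitely often in the infinite word `w`. -/
def InfOcc {α : Type} (w : ℕ → α) : Set α :=
  {a | ∀ n, ∃ m, n ≤ m ∧ w m = a}

/-- A deterministic transition-based automaton over input alphabet `σ`
with output alphabet `Γ` and set of states `Q`. -/
structure DetAut (σ Γ Q : Type) where
  init : Q
  δ : Q → σ → Q × Γ

namespace DetAut

variable {σ Γ Q : Type}

/-- The sequence of states of the run of `A` over `w`. -/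
def run (A : DetAut σ Γ Q) (w : ℕ → σ) : ℕ → Q
  | 0 => A.init
  | n + 1 => (A.δ (run A w n) (w n)).1

/-- The output word produced by `A` reading `w`. -/
def output (A : DetAut σ Γ Q) (w : ℕ → σ) (n : ℕ) : Γ :=
  (A.δ (A.run w n) (w n)).2

end DetAut

/-- `u` satisfies the Rabin condition given by the pairs in `R`. -/
def RabinAccept {Γ : Type} (R : List (Set Γ × Set Γ)) (u : ℕ → Γ) : Prop :=
  ∃ p ∈ R, (InfOcc u ∩ p.1).Nonempty ∧ InfOcc u ∩ p.2 = ∅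

/-- `u` satisfies the Streett condition given by the pairs in `R`. -/
def StreettAccept {Γ : Type} (R : List (Set Γ × Set Γ)) (u : ℕ → Γ) : Prop :=
  ∀ p ∈ R, (InfOcc u ∩ p.1).Nonempty → (InfOcc u ∩ p.2).Nonempty

/-- The language accepted by the automaton `A` with Rabin condition `R`. -/
def RabinLang {σ Γ Q : Type} (A : DetAut σ Γ Q) (R : List (Set Γ × Set Γ)) :
    Set (ℕ → σ) :=
  {w | RabinAccept R (A.output w)}

/-- The Muller language associated to the Muller condition `F`. -/
def LF {Γ : Type} (F : Set (Set Γ)) : Set (ℕ → Γ) :=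
  {w | InfOcc w ∈ F}

/-- The language `L_G = ⋃_{(v,u) ∈ E} V^* (v⁺u⁺)^ω` of infinite words over the
vertices of `G` that eventually alternate between exactly two vertices joined
by an edge of `G`: there are adjacent `v, u`, a position `N` after which only
`v` and `u` occur, and both `v` and `u` occur infinitely often. -/
def LG {V : Type} (G : SimpleGraph V) : Set (ℕ → V) :=
  {w | ∃ v u, G.Adj v u ∧
    ∃ N, (∀ n, N ≤ n → w n = v ∨ w n = u) ∧
      (∀ n, ∃ m, n ≤ m ∧ w m = v) ∧ (∀ n, ∃ m, n ≤ m ∧ w m = u)}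

section Helpers

lemma DetAut.run_succ {σ Γ Q : Type} (A : DetAut σ Γ Q) (w : ℕ → σ) (n : ℕ) :
    A.run w (n + 1) = (A.δ (A.run w n) (w n)).1 := rfl

lemma infOcc_tail {α : Type} [Fintype α] (w : ℕ → α) :
    ∃ N, ∀ n, N ≤ n → w n ∈ InfOcc w := by
  classical
  have hch : ∀ a : α, ∃ N : ℕ, a ∉ InfOcc w → ∀ m, N ≤ m → w m ≠ a := by
    intro a
    by_cases h : a ∈ InfOcc w
    · exact ⟨0, fun hc => absurd h hc⟩
    · simp only [InfOcc, Set.mem_setOf_eq, not_forall] at h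
      obtain ⟨n, hn⟩ := h
      refine ⟨n, fun _ m hm heq => hn ⟨m, hm, heq⟩⟩
  choose f hf using hch
  refine ⟨Finset.univ.sup f, fun n hn => ?_⟩
  by_contra hc
  exact hf (w n) hc n (le_trans (Finset.le_sup (Finset.mem_univ _)) hn) rfl

lemma infOcc_periodic {α : Type} (w : ℕ → α) (N p : ℕ) (hp : 1 ≤ p)
    (hper : ∀ n, N ≤ n → w (n + p) = w n) :
    InfOcc w = {a | ∃ i, N ≤ i ∧ i < N + p ∧ w i = a} := by
  have hred : ∀ m, N ≤ m → ∃ i, N ≤ i ∧ i < N + p ∧ w i = w m := by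
    intro m
    induction m using Nat.strong_induction_on with
    | _ m ih =>
      intro hm
      by_cases hlt : m < N + p
      · exact ⟨m, hm, hlt, rfl⟩
      · push_neg at hlt
        have h1 : N ≤ m - p := by omega
        have h2 : m - p < m := by omega
        have h3 : w ((m - p) + p) = w (m - p) := hper _ h1
        have h4 : (m - p) + p = m := by omega
        obtain ⟨i, hi1, hi2, hi3⟩ := ih (m - p) h2 h1
        refine ⟨i, hi1, hi2, ?_⟩
        rw [hi3, ← h3, h4]
  ext a
  constructor
  · intro ha
    obtain ⟨m, hm, hma⟩ := ha N
    obtain ⟨i, h1, h2, h3⟩ := hred m hm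
    exact ⟨i, h1, h2, h3.trans hma⟩
  · rintro ⟨i, h1, h2, rfl⟩
    intro n
    have hk : ∀ k, w (i + k * p) = w i := by
      intro k
      induction k with
      | zero => simp
      | succ k ih =>
        have he : i + (k+1) * p = (i + k * p) + p := by ring
        rw [he, hper _ (by omega), ih]
    have hle : n ≤ n * p := by nlinarith
    exact ⟨i + n * p, by omega, hk n⟩

lemma run_const {σ Γ Q : Type} (A : DetAut σ Γ Q) (v : σ) (n : ℕ) :
    A.run (fun _ => v) n = (fun q => (A.δ q v).1)^[n] A.init := by
  induction n with
  | zero => rfl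
  | succ n ih => rw [DetAut.run_succ, ih, Function.iterate_succ_apply']

lemma run_seg {σ Γ Q : Type} (A : DetAut σ Γ Q) (w : ℕ → σ) (v : σ) (s : ℕ) :
    ∀ k, (∀ i, i < k → w (s + i) = v) →
      A.run w (s + k) = (fun q => (A.δ q v).1)^[k] (A.run w s) := by
  intro k
  induction k with
  | zero => intro _; simp
  | succ k ih =>
    intro hw
    have h1 : s + (k+1) = (s + k) + 1 := by omega
    rw [h1, DetAut.run_succ, hw k (by omega), ih (fun i hi => hw i (by omega)),
      Function.iterate_succ_apply']

lemma run_shift {σ Γ Q : Type} (A : DetAut σ Γ Q) (w : ℕ → σ) (N p : ℕ)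
    (hq : A.run w (N + p) = A.run w N) (hw : ∀ n, N ≤ n → w (n + p) = w n) :
    ∀ n, N ≤ n → A.run w (n + p) = A.run w n := by
  have key : ∀ k, A.run w (N + k + p) = A.run w (N + k) := by
    intro k
    induction k with
    | zero => simpa using hq
    | succ k ih =>
      have e1 : N + (k+1) + p = (N + k + p) + 1 := by omega
      have e2 : N + (k+1) = (N + k) + 1 := by omega
      rw [e1, e2, DetAut.run_succ, DetAut.run_succ, ih, hw _ (by omega)]
  intro n hn
  have he : n = N + (n - N) := by omega
  rw [he]
  exact key _

lemma exists_cycle {Q : Type} [Fintype Q] (f : Q → Q) (q0 : Q) :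
    ∃ a, 1 ≤ a ∧ f^[a] (f^[Fintype.card Q] q0) = f^[Fintype.card Q] q0 := by
  have main : ∀ i j : ℕ, i < j → j ≤ Fintype.card Q → f^[i] q0 = f^[j] q0 →
      ∃ a, 1 ≤ a ∧ f^[a] (f^[Fintype.card Q] q0) = f^[Fintype.card Q] q0 := by
    intro i j hij hjn heq
    set n := Fintype.card Q with hn
    refine ⟨j - i, by omega, ?_⟩
    have e1 : j - i + n = (n - i) + j := by omega
    have e2 : (n - i) + i = n := by omega
    calc f^[j - i] (f^[n] q0) = f^[j - i + n] q0 := (Function.iterate_add_apply f _ n q0).symm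
      _ = f^[(n - i) + j] q0 := by rw [e1]
      _ = f^[n - i] (f^[j] q0) := Function.iterate_add_apply f _ _ q0
      _ = f^[n - i] (f^[i] q0) := by rw [heq]
      _ = f^[(n - i) + i] q0 := (Function.iterate_add_apply f _ _ q0).symm
      _ = f^[n] q0 := by rw [e2]
  obtain ⟨i, j, hne, heq⟩ := Fintype.exists_ne_map_eq_of_card_lt
    (fun i : Fin (Fintype.card Q + 1) => f^[(i : ℕ)] q0) (by simp)
  rcases Nat.lt_or_ge (i : ℕ) (j : ℕ) with h | h
  · exact main i j h (Nat.lt_succ_iff.mp j.isLt) heq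
  · have hlt : (j : ℕ) < (i : ℕ) := by
      rcases Nat.lt_or_ge (j : ℕ) (i : ℕ) with h' | h'
      · exact h'
      · exact absurd (Fin.ext (le_antisymm h' h : (i : ℕ) = (j : ℕ))) hne
    exact main j i hlt (Nat.lt_succ_iff.mp i.isLt) heq.symm

lemma iterate_absorb {Q : Type} (f : Q → Q) (x : Q) (N a : ℕ)
    (h : f^[a] (f^[N] x) = f^[N] x) :
    ∀ n, N ≤ n → f^[n + a] x = f^[n] x := by
  intro n hn
  have e : n + a = (n - N) + (a + N) := by omega
  rw [e, Function.iterate_add_apply, Function.iterate_add_apply f a N x, h,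
    ← Function.iterate_add_apply]
  congr 1
  omega

lemma const_not_mem_LG {V : Type} (G : SimpleGraph V) (v : V) :
    (fun _ => v) ∉ LG G := by
  rintro ⟨v', u', hadj, N, _, hv', hu'⟩
  obtain ⟨m, _, hm⟩ := hv' 0
  obtain ⟨m', _, hm'⟩ := hu' 0
  rw [← hm, ← hm'] at hadj
  exact G.loopless.irrefl v hadj

end Helpers

section Upper

/-- The Rabin automaton built from a colouring: states are colours, the state
records the colour of the last letter read, and the output records the current
state together with the letter read. -/
def colAut {V : Type} {k : ℕ} (c : V → Fin k) (v0 : V) : DetAut V (Fin k × V) (Fin k) :=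
  ⟨c v0, fun q v => (c v, (q, v))⟩

open Classical in
/-- The Rabin pairs for `colAut`. -/
noncomputable def colPairs {V : Type} [Fintype V] {k : ℕ} (G : SimpleGraph V)
    (c : V → Fin k) : List (Set (Fin k × V) × Set (Fin k × V)) :=
  (Finset.univ : Finset (V × V)).toList.map fun p =>
    if G.Adj p.1 p.2 then
      ({(c p.2, p.1)},
        {x : Fin k × V | ¬((x.1 = c p.1 ∨ x.1 = c p.2) ∧ (x.2 = p.1 ∨ x.2 = p.2))})
    else ((∅ : Set (Fin k × V)), (∅ : Set (Fin k × V)))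

lemma colAut_run_succ {V : Type} {k : ℕ} (c : V → Fin k) (v0 : V) (w : ℕ → V) (n : ℕ) :
    (colAut c v0).run w (n + 1) = c (w n) := rfl

lemma colAut_output {V : Type} {k : ℕ} (c : V → Fin k) (v0 : V) (w : ℕ → V) (n : ℕ) :
    (colAut c v0).output w n = ((colAut c v0).run w n, w n) := rfl

lemma colLang {V : Type} [Fintype V] {k : ℕ} (G : SimpleGraph V)
    (C : G.Coloring (Fin k)) (v0 : V) :
    RabinLang (colAut (fun v => C v) v0) (colPairs G (fun v => C v)) = LG G := by
  classical
  set c : V → Fin k := fun v => C v with hc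
  set A := colAut c v0 with hA
  ext w
  simp only [RabinLang, Set.mem_setOf_eq]
  constructor
  · rintro ⟨p, hpR, ⟨x, hxI, hxE⟩, hFe⟩
    simp only [colPairs, List.mem_map] at hpR
    obtain ⟨⟨v, u⟩, -, rfl⟩ := hpR
    by_cases hadj : G.Adj v u
    swap
    · rw [if_neg hadj] at hxE
      simp at hxE
    rw [if_pos hadj] at hxE hFe
    have hxe : x = (c u, v) := hxE
    subst hxe
    -- every infinitely occurring output letter is "good"
    have hgood : ∀ y ∈ InfOcc (A.output w),
        (y.1 = c v ∨ y.1 = c u) ∧ (y.2 = v ∨ y.2 = u) := by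
      intro y hy
      by_contra hcon
      exact Set.eq_empty_iff_forall_notMem.mp hFe y ⟨hy, hcon⟩
    obtain ⟨N, hN⟩ := infOcc_tail (A.output w)
    have htail : ∀ n, N ≤ n → w n = v ∨ w n = u := by
      intro n hn
      exact (hgood _ (hN n hn)).2
    have hvinf : ∀ n, ∃ m, n ≤ m ∧ w m = v := by
      intro n
      obtain ⟨m, hm, hme⟩ := hxI n
      refine ⟨m, hm, ?_⟩
      have : (A.output w m).2 = v := by rw [hme]
      exact this
    have huinf : ∀ n, ∃ m, n ≤ m ∧ w m = u := by
      by_contra hcon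
      push_neg at hcon
      obtain ⟨M0, hM0⟩ := hcon
      set M := max N M0 with hM
      have hvc : ∀ m, M ≤ m → w m = v := by
        intro m hm
        rcases htail m (le_trans (le_max_left _ _) hm) with h | h
        · exact h
        · exact absurd h (hM0 m (le_trans (le_max_right _ _) hm))
      obtain ⟨m, hm, hme⟩ := hxI (M + 1)
      have hm1 : m = (m - 1) + 1 := by omega
      have h1 : (A.output w m).1 = c (w (m - 1)) := by
        rw [colAut_output]
        show A.run w m = c (w (m-1))
        rw [hm1]
        exact colAut_run_succ c v0 w (m - 1)
      have h2 : (A.output w m).1 = c u := by rw [hme]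
      have h3 : w (m - 1) = v := hvc _ (by omega)
      rw [h1, h3] at h2
      exact C.valid hadj h2
    exact ⟨v, u, hadj, N, htail, hvinf, huinf⟩
  · rintro ⟨v, u, hadj, N, htail, hvinf, huinf⟩
    refine ⟨_, List.mem_map.mpr ⟨(v, u), Finset.mem_toList.mpr (Finset.mem_univ _), rfl⟩, ?_, ?_⟩
    · -- nonempty intersection with the first component
      rw [if_pos hadj]
      refine ⟨(c u, v), ?_, rfl⟩
      intro n
      obtain ⟨a0, ha0, ha0u⟩ := huinf (max n N)
      have hP : ∃ m, a0 < m ∧ w m = v := by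
        obtain ⟨m, hm, hmv⟩ := hvinf (a0 + 1)
        exact ⟨m, by omega, hmv⟩
      set m := Nat.find hP with hmdef
      obtain ⟨hm1, hm2⟩ := Nat.find_spec hP
      have hprev : w (m - 1) = u := by
        rcases Nat.lt_or_ge a0 (m - 1) with hlt | hge
        · have hmin := Nat.find_min hP (show m - 1 < m by omega)
          have hne : w (m - 1) ≠ v := fun hv => hmin ⟨hlt, hv⟩
          have := htail (m - 1) (by omega)
          tauto
        · have he : m - 1 = a0 := by omega
          rw [he]
          exact ha0u
      have hm1' : m = (m - 1) + 1 := by omega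
      have hrun : A.run w m = c u := by
        rw [hm1']
        rw [colAut_run_succ c v0 w (m - 1), hprev]
      refine ⟨m, by omega, ?_⟩
      rw [colAut_output, hrun, hm2]
    · -- empty intersection with the second component
      rw [if_pos hadj]
      apply Set.eq_empty_iff_forall_notMem.mpr
      rintro x ⟨hxI, hxF⟩
      obtain ⟨m, hm, hme⟩ := hxI (N + 1)
      apply hxF
      have hm1 : m = (m - 1) + 1 := by omega
      have h1 : x.1 = c (w (m - 1)) := by
        rw [← hme, colAut_output]
        show A.run w m = c (w (m-1))
        rw [hm1]
        exact colAut_run_succ c v0 w (m - 1)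
      have h2 : x.2 = w m := by rw [← hme]; rfl
      constructor
      · rcases htail (m - 1) (by omega) with h | h <;> rw [h1, h]
        · exact Or.inl rfl
        · exact Or.inr rfl
      · rcases htail m (by omega) with h | h <;> rw [h2, h]
        · exact Or.inl rfl
        · exact Or.inr rfl

end Upper

section Lower

/-- The word `v^N (v^a u^b)^ω` (with `P = a + b`). -/
def combWord {V : Type} (v u : V) (N a P : ℕ) : ℕ → V := fun n =>
  if n < N then v else if (n - N) % P < a then v else u

lemma lowerBound {V Q Γ : Type} [Fintype Q] (G : SimpleGraph V)
    (A : DetAut V Γ Q) (R : List (Set Γ × Set Γ)) (h : RabinLang A R = LG G) :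
    G.Colorable (Fintype.card Q) := by
  classical
  set N := Fintype.card Q with hNdef
  set F : V → Q → Q := fun v q => (A.δ q v).1 with hFdef
  set c : V → Q := fun v => (F v)^[N] A.init with hcdef
  have hvalid : ∀ {v u : V}, G.Adj v u → c v ≠ c u := by
    intro v u hadj hcv
    obtain ⟨a, ha1, hva⟩ := exists_cycle (F v) A.init
    obtain ⟨b, hb1, hub⟩ := exists_cycle (F u) A.init
    -- hva : (F v)^[a] (c v) = c v    hub : (F u)^[b] (c u) = c u
    have hva' : (F v)^[a] (c v) = c v := hva
    have hub' : (F u)^[b] (c v) = c v := by rw [hcv]; exact hub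
    set P := a + b with hPdef
    set q : Q := c v with hqdef
    set w : ℕ → V := combWord v u N a P with hwdef
    -- basic facts about the word
    have hw1 : ∀ i, i < N → w i = v := by
      intro i hi
      simp only [hwdef, combWord, if_pos hi]
    have hw2 : ∀ i, i < a → w (N + i) = v := by
      intro i hi
      have h1 : ¬ (N + i < N) := by omega
      have h2 : (N + i - N) % P = i := by
        have : N + i - N = i := by omega
        rw [this, Nat.mod_eq_of_lt (by omega)]
      simp only [hwdef, combWord, if_neg h1, h2, if_pos hi]
    have hw3 : ∀ i, i < b → w (N + a + i) = u := by
      intro i hi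
      have h1 : ¬ (N + a + i < N) := by omega
      have h2 : (N + a + i - N) % P = a + i := by
        have : N + a + i - N = a + i := by omega
        rw [this, Nat.mod_eq_of_lt (by omega)]
      have h3 : ¬ (a + i < a) := by omega
      simp only [hwdef, combWord, if_neg h1, h2, if_neg h3]
    have hper : ∀ n, N ≤ n → w (n + P) = w n := by
      intro n hn
      have h1 : ¬ (n + P < N) := by omega
      have h2 : ¬ (n < N) := by omega
      have h3 : (n + P - N) % P = (n - N) % P := by
        have : n + P - N = (n - N) + P := by omega
        rw [this, Nat.add_mod_right]
      simp only [hwdef, combWord, if_neg h1, if_neg h2, h3]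
    -- run facts
    have hrun0 : A.run w 0 = A.init := rfl
    have hrunN : A.run w N = q := by
      have := run_seg A w v 0 N (fun i hi => by simpa using hw1 i hi)
      simpa [hrun0] using this
    have hrun_v : ∀ i, i ≤ a → A.run w (N + i) = (F v)^[i] q := by
      intro i hi
      have := run_seg A w v N i (fun j hj => hw2 j (by omega))
      rw [this, hrunN]
    have hrunNa : A.run w (N + a) = q := by
      rw [hrun_v a le_rfl]
      exact hva'
    have hrun_u : ∀ i, i ≤ b → A.run w (N + a + i) = (F u)^[i] q := by
      intro i hi
      have := run_seg A w u (N + a) i (fun j hj => hw3 j (by omega))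
      rw [this, hrunNa]
    have hrunNP : A.run w (N + P) = q := by
      have : N + P = N + a + b := by omega
      rw [this, hrun_u b le_rfl]
      exact hub'
    have hrshift : ∀ n, N ≤ n → A.run w (n + P) = A.run w n :=
      run_shift A w N P (by rw [hrunNP, hrunN]) hper
    have houtper : ∀ n, N ≤ n → A.output w (n + P) = A.output w n := by
      intro n hn
      show (A.δ (A.run w (n + P)) (w (n + P))).2 = (A.δ (A.run w n) (w n)).2
      rw [hrshift n hn, hper n hn]
    have hPpos : 1 ≤ P := by omega
    have hIw : InfOcc (A.output w) =
        {x | ∃ i, N ≤ i ∧ i < N + P ∧ A.output w i = x} :=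
      infOcc_periodic _ N P hPpos houtper
    -- the constant words
    set wv : ℕ → V := fun _ => v with hwvdef
    set wu : ℕ → V := fun _ => u with hwudef
    have hrunv : ∀ n, A.run wv n = (F v)^[n] A.init := fun n => run_const A v n
    have hrunu : ∀ n, A.run wu n = (F u)^[n] A.init := fun n => run_const A u n
    have houtv : ∀ n, N ≤ n → A.output wv (n + a) = A.output wv n := by
      intro n hn
      show (A.δ (A.run wv (n + a)) v).2 = (A.δ (A.run wv n) v).2
      rw [hrunv, hrunv, iterate_absorb (F v) A.init N a hva' n hn]
    have houtu : ∀ n, N ≤ n → A.output wu (n + b) = A.output wu n := by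
      intro n hn
      show (A.δ (A.run wu (n + b)) u).2 = (A.δ (A.run wu n) u).2
      rw [hrunu, hrunu, iterate_absorb (F u) A.init N b hub n hn]
    have hIv : InfOcc (A.output wv) =
        {x | ∃ i, N ≤ i ∧ i < N + a ∧ A.output wv i = x} :=
      infOcc_periodic _ N a ha1 houtv
    have hIu : InfOcc (A.output wu) =
        {x | ∃ i, N ≤ i ∧ i < N + b ∧ A.output wu i = x} :=
      infOcc_periodic _ N b hb1 houtu
    -- matching outputs
    have hmatchv : ∀ i, N ≤ i → i < N + a → A.output w i = A.output wv i := by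
      intro i hi1 hi2
      have he : i = N + (i - N) := by omega
      show (A.δ (A.run w i) (w i)).2 = (A.δ (A.run wv i) v).2
      have h1 : w i = v := by rw [he]; exact hw2 _ (by omega)
      have h2 : A.run w i = (F v)^[i - N] q := by
        have h2' := hrun_v (i - N) (by omega)
        rw [← he] at h2'
        exact h2' 
      have hqv : (F v)^[N] A.init = q := rfl
      have h3 : A.run wv i = (F v)^[i - N] q := by
        rw [hrunv, ← hqv, ← Function.iterate_add_apply]
        congr 1
        omega
      rw [h1, h2, h3]
    have hmatchu : ∀ i, N + a ≤ i → i < N + P → A.output w i = A.output wu (i - a) := by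
      intro i hi1 hi2
      have he : i = N + a + (i - N - a) := by omega
      show (A.δ (A.run w i) (w i)).2 = (A.δ (A.run wu (i - a)) u).2
      have h1 : w i = u := by rw [he]; exact hw3 _ (by omega)
      have h2 : A.run w i = (F u)^[i - N - a] q := by
        have h2' := hrun_u (i - N - a) (by omega)
        rw [← he] at h2'
        exact h2' 
      have hqu : (F u)^[N] A.init = q := hcv.symm
      have h3 : A.run wu (i - a) = (F u)^[i - N - a] q := by
        rw [hrunu, ← hqu, ← Function.iterate_add_apply]
        congr 1
        omega
      rw [h1, h2, h3]
    -- the union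
    have hunion : InfOcc (A.output w) = InfOcc (A.output wv) ∪ InfOcc (A.output wu) := by
      rw [hIw, hIv, hIu]
      ext x
      constructor
      · rintro ⟨i, hi1, hi2, rfl⟩
        by_cases hia : i < N + a
        · exact Or.inl ⟨i, hi1, hia, (hmatchv i hi1 hia).symm⟩
        · refine Or.inr ⟨i - a, by omega, by omega, ?_⟩
          exact (hmatchu i (by omega) hi2).symm
      · rintro (⟨i, hi1, hi2, rfl⟩ | ⟨i, hi1, hi2, rfl⟩)
        · exact ⟨i, hi1, by omega, hmatchv i hi1 hi2⟩
        · refine ⟨i + a, by omega, by omega, ?_⟩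
          have := hmatchu (i + a) (by omega) (by omega)
          simpa using this
    -- w belongs to L_G
    have hwLG : w ∈ LG G := by
      refine ⟨v, u, hadj, N, ?_, ?_, ?_⟩
      · intro n hn
        by_cases hc2 : (n - N) % P < a
        · left
          simp only [hwdef, combWord, if_neg (by omega : ¬ n < N), if_pos hc2]
        · right
          simp only [hwdef, combWord, if_neg (by omega : ¬ n < N), if_neg hc2]
      · intro n
        have hle : n ≤ n * P := by nlinarith
        refine ⟨N + n * P, by omega, ?_⟩
        have h2 : (N + n * P - N) % P = 0 := by
          have : N + n * P - N = n * P := by omega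
          rw [this, Nat.mul_mod_left]
        simp only [hwdef, combWord, if_neg (by omega : ¬ N + n * P < N), h2, if_pos (by omega : 0 < a)]
      · intro n
        have hle : n ≤ n * P := by nlinarith
        refine ⟨N + a + n * P, by omega, ?_⟩
        have h2 : (N + a + n * P - N) % P = a := by
          have : N + a + n * P - N = a + n * P := by omega
          rw [this, Nat.add_mul_mod_self_right, Nat.mod_eq_of_lt (by omega)]
        simp only [hwdef, combWord, if_neg (by omega : ¬ N + a + n * P < N), h2,
          if_neg (by omega : ¬ a < a)]
    -- w is accepted, so one of the constant words is accepted: contradiction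
    have hacc : RabinAccept R (A.output w) := by
      have : w ∈ RabinLang A R := by rw [h]; exact hwLG
      exact this
    obtain ⟨p, hpR, ⟨x, hxI, hxE⟩, hFe⟩ := hacc
    rw [hunion] at hxI
    rcases hxI with hx | hx
    · have haccv : RabinAccept R (A.output wv) := by
        refine ⟨p, hpR, ⟨x, hx, hxE⟩, ?_⟩
        apply Set.subset_empty_iff.mp
        rw [← hFe]
        apply Set.inter_subset_inter_left
        rw [hunion]
        exact Set.subset_union_left
      have : wv ∈ RabinLang A R := haccv
      rw [h] at this
      exact const_not_mem_LG G v this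
    · have haccu : RabinAccept R (A.output wu) := by
        refine ⟨p, hpR, ⟨x, hx, hxE⟩, ?_⟩
        apply Set.subset_empty_iff.mp
        rw [← hFe]
        apply Set.inter_subset_inter_left
        rw [hunion]
        exact Set.subset_union_right
      have : wu ∈ RabinLang A R := haccu
      rw [h] at this
      exact const_not_mem_LG G u this
  exact (SimpleGraph.Coloring.mk c fun hadj => hvalid hadj).colorable

end Lower


/-- The minimal number of states of a deterministic Rabin automaton recognising
`L_G` is exactly the chromatic number of `G`. -/
theorem stmt5 {V : Type} [Fintype V] [Nonempty V] (G : SimpleGraph V) :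
    ((sInf {n : ℕ | ∃ (Q : Type) (_ : Fintype Q), Fintype.card Q = n ∧
        ∃ (Γ : Type) (A : DetAut V Γ Q) (R : List (Set Γ × Set Γ)),
          RabinLang A R = LG G} : ℕ) : ℕ∞) = G.chromaticNumber := by
  classical
  set S := {n : ℕ | ∃ (Q : Type) (_ : Fintype Q), Fintype.card Q = n ∧
      ∃ (Γ : Type) (A : DetAut V Γ Q) (R : List (Set Γ × Set Γ)),
        RabinLang A R = LG G} with hS
  have hcol : G.Colorable (Fintype.card V) := G.colorable_of_fintype
  have hk : G.Colorable (ENat.toNat G.chromaticNumber) :=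
    G.colorable_chromaticNumber_of_fintype
  set k := ENat.toNat G.chromaticNumber with hkdef
  have hne : G.chromaticNumber ≠ ⊤ := by
    rw [SimpleGraph.chromaticNumber_ne_top_iff_exists]
    exact ⟨_, hcol⟩
  have hcast : (k : ℕ∞) = G.chromaticNumber := ENat.coe_toNat hne
  obtain ⟨C⟩ := hk
  have hmem : k ∈ S := by
    refine ⟨Fin k, inferInstance, by simp, Fin k × V,
      colAut (fun v => C v) (Classical.arbitrary V),
      colPairs G (fun v => C v), colLang G C _⟩
  have hlb : ∀ n ∈ S, k ≤ n := by
    rintro n ⟨Q, hQ, hcard, Γ, A, R, hL⟩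
    have hc : G.Colorable (@Fintype.card Q hQ) := @lowerBound V Q Γ hQ G A R hL
    have h2 : G.chromaticNumber ≤ ((@Fintype.card Q hQ : ℕ) : ℕ∞) := hc.chromaticNumber_le
    rw [← hcast, Nat.cast_le] at h2
    exact hcard ▸ h2
  have hinf : sInf S = k :=
    le_antisymm (Nat.sInf_le hmem) (le_csInf ⟨k, hmem⟩ hlb)
  rw [hinf, hcast]
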